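/- Let H̄ be a K×K matrix whose eigenvalues all have real part at most λ with λ < 1, with maximal Jordan block size ν among eigenvalues achieving real part λ, and let B̄_{n,m} = ∏_{j=m+1}^n (I + j^{-1}H̄). Then there exists a constant C such that ‖B̄_{n,m}‖ ≤ C (n/m)^λ (log(n/m) ∨ 1)^{ν−1} for all 1 ≤ m ≤ n. -/

import Mathlib

open Finset Matrix Polynomial


lemma auxLog_ratio (a : ℝ) (ha : 0 < a) : Real.log a - Real.log (a+1) ≤ -(a+1)⁻¹ := by
  have h1 : (0:ℝ) < a + 1 := by linarith
  have h2 : Real.log (a / (a+1)) ≤ a/(a+1) - 1 := Real.log_le_sub_one_of_pos (by positivity)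
  rw [Real.log_div (ne_of_gt ha) (ne_of_gt h1)] at h2
  have : a/(a+1) - 1 = -(a+1)⁻¹ := by field_simp; ring
  linarith [this ▸ h2]

lemma auxLog_ratio' (a : ℝ) (ha : 0 < a) : Real.log (a+1) - Real.log a ≤ a⁻¹ := by
  have h1 : (0:ℝ) < a + 1 := by linarith
  have h2 : Real.log ((a+1) / a) ≤ (a+1)/a - 1 := Real.log_le_sub_one_of_pos (by positivity)
  rw [Real.log_div (ne_of_gt h1) (ne_of_gt ha)] at h2
  have : (a+1)/a - 1 = a⁻¹ := by field_simp; ring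
  linarith [this ▸ h2]

lemma auxTele_sum_Ioc_inv_le (m n : ℕ) (hm : 1 ≤ m) (hmn : m ≤ n) :
    ∑ j ∈ Finset.Ioc m n, ((j:ℝ))⁻¹ ≤ Real.log n - Real.log m := by
  induction n, hmn using Nat.le_induction with
  | base => simp
  | succ n hn ih =>
    rw [Finset.sum_Ioc_succ_top (by omega)]
    have hn0 : (0:ℝ) < n := by exact_mod_cast by omega
    have := auxLog_ratio n hn0
    push_cast
    push_cast at ih
    linarith

lemma auxTele_le_sum_Ioc_inv (m n : ℕ) (hm : 1 ≤ m) (hmn : m ≤ n) :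
    Real.log n - Real.log m - Real.log 2 ≤ ∑ j ∈ Finset.Ioc m n, ((j:ℝ))⁻¹ := by
  have main : Real.log (n+1) - Real.log (m+1) ≤ ∑ j ∈ Finset.Ioc m n, ((j:ℝ))⁻¹ := by
    induction n, hmn using Nat.le_induction with
    | base => simp
    | succ n hn ih =>
      rw [Finset.sum_Ioc_succ_top (by omega)]
      have hn0 : (0:ℝ) < (n:ℝ) + 1 := by positivity
      have := auxLog_ratio' ((n:ℝ)+1) hn0
      push_cast
      push_cast at ih
      linarith
  have hm1 : (1:ℝ) ≤ m := by exact_mod_cast hm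
  have h1 : Real.log (m+1) ≤ Real.log m + Real.log 2 := by
    rw [← Real.log_mul (by linarith) (by norm_num)]
    apply Real.log_le_log (by linarith)
    nlinarith
  have h2 : Real.log n ≤ Real.log (n+1) := by
    have hn1 : (1:ℝ) ≤ n := by have : m ≤ n := hmn; exact_mod_cast by omega
    apply Real.log_le_log (by linarith); linarith
  linarith

lemma auxTele_sum_Ioc_inv_sq_le (m n : ℕ) (hm : 1 ≤ m) (hmn : m ≤ n) :
    ∑ j ∈ Finset.Ioc m n, ((j:ℝ))⁻¹^2 ≤ 1 := by
  have main : ∑ j ∈ Finset.Ioc m n, ((j:ℝ))⁻¹^2 ≤ (m:ℝ)⁻¹ - (n:ℝ)⁻¹ := by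
    induction n, hmn using Nat.le_induction with
    | base => simp
    | succ n hn ih =>
      rw [Finset.sum_Ioc_succ_top (by omega)]
      have hn0 : (0:ℝ) < n := by exact_mod_cast by omega
      have hn1 : (0:ℝ) < (n:ℝ) + 1 := by linarith
      have key : (((n:ℝ)+1)⁻¹)^2 ≤ (n:ℝ)⁻¹ - ((n:ℝ)+1)⁻¹ := by
        have hdiff : (n:ℝ)⁻¹ - ((n:ℝ)+1)⁻¹ = ((n:ℝ)*((n:ℝ)+1))⁻¹ := by
          field_simp; ring
        rw [hdiff, inv_pow]
        apply inv_anti₀ (by positivity)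
        nlinarith
      push_cast
      push_cast at ih
      linarith
  have h1 : (m:ℝ)⁻¹ ≤ 1 := by
    rw [inv_le_one_iff₀]; right; exact_mod_cast hm
  have h2 : (0:ℝ) ≤ (n:ℝ)⁻¹ := by positivity
  linarith


-- coefficient of a product of linear polynomials, with the θ-trick bound
lemma auxCoeff_prod_linear_le (s : Finset ℕ) (a b : ℕ → ℂ) (k : ℕ) (θ : ℝ)
    (hθ : 0 < θ) :
    ‖(∏ j ∈ s, (C (a j) * X + C (b j))).coeff k‖ ≤
      θ⁻¹ ^ k * ∏ j ∈ s, (θ * ‖a j‖ + ‖b j‖) := by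
  rw [Finset.prod_add, Polynomial.finset_sum_coeff]
  have hterm : ∀ t ∈ s.powerset,
      (((∏ j ∈ t, (C (a j) * X)) * ∏ j ∈ s \ t, C (b j)).coeff k) =
        (if t.card = k then (∏ j ∈ t, a j) * ∏ j ∈ s \ t, b j else 0) := by
    intro t _
    have h1 : (∏ j ∈ t, (C (a j) * X)) = C (∏ j ∈ t, a j) * X ^ t.card := by
      rw [Finset.prod_mul_distrib, Finset.prod_const, map_prod]
    have h2 : (∏ j ∈ s \ t, C (b j)) = C (∏ j ∈ s \ t, b j) := (map_prod _ _ _).symm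
    rw [h1, h2]
    have : C (∏ j ∈ t, a j) * X ^ t.card * C (∏ j ∈ s \ t, b j) =
        C ((∏ j ∈ t, a j) * ∏ j ∈ s \ t, b j) * X ^ t.card := by
      rw [_root_.map_mul]; ring
    rw [this, Polynomial.coeff_C_mul, Polynomial.coeff_X_pow]
    by_cases h : t.card = k <;> simp [h] <;> tauto
  calc ‖∑ t ∈ s.powerset, ((∏ j ∈ t, (C (a j) * X)) * ∏ j ∈ s \ t, C (b j)).coeff k‖
      ≤ ∑ t ∈ s.powerset, ‖((∏ j ∈ t, (C (a j) * X)) * ∏ j ∈ s \ t, C (b j)).coeff k‖ :=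
        norm_sum_le _ _
    _ ≤ ∑ t ∈ s.powerset, θ⁻¹ ^ k * ((∏ j ∈ t, (θ * ‖a j‖)) * ∏ j ∈ s \ t, ‖b j‖) := by
        apply Finset.sum_le_sum
        intro t ht
        rw [hterm t ht]
        by_cases h : t.card = k
        · simp only [h, if_true]
          rw [Finset.prod_mul_distrib, Finset.prod_const, ← h]
          have : θ⁻¹ ^ t.card * (θ ^ t.card * (∏ j ∈ t, ‖a j‖) * ∏ j ∈ s \ t, ‖b j‖) =
              (θ⁻¹ * θ) ^ t.card * ((∏ j ∈ t, ‖a j‖) * ∏ j ∈ s \ t, ‖b j‖) := by ring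
          rw [this, inv_mul_cancel₀ (ne_of_gt hθ), one_pow, one_mul, norm_mul, norm_prod,
            norm_prod]
        · simp only [h, if_false, norm_zero]
          positivity
    _ = θ⁻¹ ^ k * ∑ t ∈ s.powerset, ((∏ j ∈ t, (θ * ‖a j‖)) * ∏ j ∈ s \ t, ‖b j‖) := by
        rw [Finset.mul_sum]
    _ = θ⁻¹ ^ k * ∏ j ∈ s, (θ * ‖a j‖ + ‖b j‖) := by rw [← Finset.prod_add]

-- single factor bound
lemma auxFactor_le (z : ℂ) (θ t : ℝ) (ht : 0 ≤ t) :
    θ * t + ‖1 + z * (t:ℂ)‖ ≤ Real.exp ((z.re + θ) * t + (‖z‖^2/2) * t^2) := by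
  have hsq : ‖(1 + z * (t:ℂ))‖^2 = 1 + 2*z.re*t + ‖z‖^2 * t^2 := by
    rw [Complex.sq_norm, Complex.normSq_apply,
      Complex.sq_norm, Complex.normSq_apply]
    simp [Complex.add_re, Complex.add_im, Complex.mul_re, Complex.mul_im]
    ring
  have hle : ‖1 + z * (t:ℂ)‖ ≤ 1 + z.re * t + (‖z‖^2/2) * t^2 := by
    nlinarith [norm_nonneg (1 + z * (t:ℂ)), sq_nonneg (‖1 + z * (t:ℂ)‖ - 1)]
  have := Real.add_one_le_exp ((z.re + θ) * t + (‖z‖^2/2) * t^2)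
  linarith


-- decay: (log (max y e))^k * y^(-ε) bounded for y ≥ 1
lemma auxDecay (ε : ℝ) (hε : 0 < ε) (k : ℕ) :
    ∃ c : ℝ, 0 ≤ c ∧ ∀ y : ℝ, 1 ≤ y →
      (Real.log (max y (Real.exp 1))) ^ k * y ^ (-ε) ≤ c := by
  set δ : ℝ := ε / (k+1) with hδdef
  have hδ : 0 < δ := by positivity
  refine ⟨max 1 ((δ⁻¹)^k), le_trans zero_le_one (le_max_left _ _), ?_⟩
  intro y hy
  have hy0 : (0:ℝ) < y := by linarith
  rcases le_or_gt y (Real.exp 1) with hc | hc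
  · rw [max_eq_right hc, Real.log_exp, one_pow, one_mul]
    calc y ^ (-ε) ≤ 1 := Real.rpow_le_one_of_one_le_of_nonpos hy (by linarith)
      _ ≤ _ := le_max_left _ _
  · rw [max_eq_left hc.le]
    have hlog : Real.log y ≤ y ^ δ / δ := Real.log_le_rpow_div hy0.le hδ
    have hlognn : 0 ≤ Real.log y := Real.log_nonneg hy
    have h1 : (Real.log y) ^ k ≤ (y ^ δ / δ) ^ k := pow_le_pow_left₀ hlognn hlog k
    have h2 : (y ^ δ / δ) ^ k = (δ⁻¹)^k * (y ^ δ) ^ k := by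
      rw [div_pow]; ring
    have h3 : (y ^ δ) ^ k * y ^ (-ε) = y ^ (δ * k - ε) := by
      rw [← Real.rpow_natCast (y ^ δ) k, ← Real.rpow_mul hy0.le, ← Real.rpow_add hy0]
      ring_nf
    have h4 : δ * k - ε = -δ := by
      have hk1 : ((k:ℝ)+1) ≠ 0 := by positivity
      have he : δ * ((k:ℝ)+1) = ε := by rw [hδdef]; exact div_mul_cancel₀ ε hk1
      linarith [he]
    have h5 : y ^ (δ * k - ε) ≤ 1 := by
      rw [h4]; exact Real.rpow_le_one_of_one_le_of_nonpos hy (by linarith)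
    have hrnn : 0 ≤ y ^ (-ε) := Real.rpow_nonneg hy0.le _
    calc (Real.log y) ^ k * y ^ (-ε) ≤ (y ^ δ / δ) ^ k * y ^ (-ε) := by
          apply mul_le_mul_of_nonneg_right h1 hrnn
      _ = (δ⁻¹)^k * ((y ^ δ) ^ k * y ^ (-ε)) := by rw [h2]; ring
      _ = (δ⁻¹)^k * y ^ (δ * k - ε) := by rw [h3]
      _ ≤ (δ⁻¹)^k * 1 := by
          apply mul_le_mul_of_nonneg_left h5 (by positivity)
      _ = (δ⁻¹)^k := mul_one _
      _ ≤ _ := le_max_right _ _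

lemma auxAlg1 (E Q P c1 c2 : ℝ) (hEQ : E ≤ Q) (hP : 0 ≤ P) (hc1 : 0 ≤ c1)
    (hc2 : 0 ≤ c2) (hQ : 0 ≤ Q) : E * (P * c1) ≤ c1 * (c2+1) * P * Q := by
  nlinarith [mul_nonneg (mul_nonneg hc1 hP) (sub_nonneg.mpr hEQ),
    mul_nonneg (mul_nonneg (mul_nonneg hc1 hc2) hP) hQ]

lemma auxAlg2 (P c1 c2 Q : ℝ) (hP : 0 ≤ P) (hc1 : 0 ≤ c1) (hc2 : 0 ≤ c2)
    (hQ : 1 ≤ Q) : c2 * P * c1 ≤ c1 * (c2+1) * P * Q := by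
  nlinarith [mul_nonneg (mul_nonneg (mul_nonneg hc1 hc2) hP) (sub_nonneg.mpr hQ),
    mul_nonneg (mul_nonneg hc1 hP) (le_trans zero_le_one hQ)]

lemma auxCore (lam : ℝ) (ν : ℕ) (hν : 1 ≤ ν) (z : ℂ) (k : ℕ) (hre : z.re ≤ lam)
    (hk : z.re = lam → k ≤ ν - 1) :
    ∃ c : ℝ, 0 ≤ c ∧ ∀ m n : ℕ, 1 ≤ m → m ≤ n →
      ‖(∏ j ∈ Finset.Ioc m n,
          (C ((j:ℂ)⁻¹) * X + C (1 + z * (j:ℂ)⁻¹))).coeff k‖ ≤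
        c * ((n:ℝ)/m) ^ lam * (Real.log (max ((n:ℝ)/m) (Real.exp 1))) ^ (ν-1) := by
  classical
  set x := z.re with hxdef
  set cz : ℝ := ‖z‖^2/2 with hczdef
  set c1 : ℝ := Real.exp (2 + |x| + cz) with hc1def
  have hc1 : 0 ≤ c1 := Real.exp_nonneg _
  -- choose the decay constant (used only in the x < lam case)
  obtain ⟨c2, hc2nn, hc2⟩ : ∃ c : ℝ, 0 ≤ c ∧ (x < lam → ∀ y : ℝ, 1 ≤ y →
      (Real.log (max y (Real.exp 1))) ^ k * y ^ (x - lam) ≤ c) := by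
    rcases eq_or_lt_of_le hre with heq | hlt
    · exact ⟨0, le_refl _, fun hxl => absurd heq (ne_of_lt hxl)⟩
    · obtain ⟨c, hcnn, hc⟩ := auxDecay (lam - x) (by linarith) k
      exact ⟨c, hcnn, fun _ y hy => by
        have := hc y hy
        rwa [show x - lam = -(lam - x) by ring]⟩
  refine ⟨c1 * (c2 + 1), by positivity, ?_⟩
  intro m n hm hmn
  set y : ℝ := (n:ℝ)/m with hydef
  have hm0 : (0:ℝ) < m := by exact_mod_cast hm
  have hn0 : (0:ℝ) < n := by exact_mod_cast by omega
  have hy1 : 1 ≤ y := by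
    rw [hydef, le_div_iff₀ hm0]; simp; exact_mod_cast hmn
  have hy0 : 0 < y := by linarith
  set L : ℝ := Real.log (max y (Real.exp 1)) with hLdef
  have hL1 : 1 ≤ L := by
    have h := Real.log_le_log (Real.exp_pos 1) (le_max_right y (Real.exp 1))
    rw [Real.log_exp] at h
    exact h
  have hL0 : 0 < L := by linarith
  have hlogyL : Real.log y ≤ L := Real.log_le_log hy0 (le_max_left _ _)
  have hlogy0 : 0 ≤ Real.log y := Real.log_nonneg hy1
  set θ : ℝ := L⁻¹ with hθdef
  have hθ0 : 0 < θ := by positivity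
  have hθ1 : θ ≤ 1 := by
    rw [hθdef]; exact inv_le_one_of_one_le₀ hL1
  -- step 1 : coefficient bound
  have step1 := auxCoeff_prod_linear_le (Finset.Ioc m n) (fun j => (j:ℂ)⁻¹)
    (fun j => 1 + z * (j:ℂ)⁻¹) k θ hθ0
  -- step 2 : factor bounds
  have hnormj : ∀ j ∈ Finset.Ioc m n, ‖((j:ℂ)⁻¹)‖ = ((j:ℝ))⁻¹ := by
    intro j hj
    rw [norm_inv]
    norm_num
  have step2 : ∏ j ∈ Finset.Ioc m n, (θ * ‖((j:ℂ)⁻¹)‖ + ‖1 + z * (j:ℂ)⁻¹‖) ≤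
      ∏ j ∈ Finset.Ioc m n, Real.exp ((x + θ) * ((j:ℝ))⁻¹ + cz * ((j:ℝ)⁻¹)^2) := by
    apply Finset.prod_le_prod
    · intro j hj; positivity
    · intro j hj
      rw [hnormj j hj]
      have hj0 : (0:ℝ) ≤ ((j:ℝ))⁻¹ := by positivity
      have := auxFactor_le z θ ((j:ℝ))⁻¹ hj0
      have hcast : ((((j:ℝ))⁻¹ : ℝ) : ℂ) = (j:ℂ)⁻¹ := by push_cast; ring
      rw [hcast] at this
      exact this
  -- step 3 : sum the exponents
  set H : ℝ := ∑ j ∈ Finset.Ioc m n, ((j:ℝ))⁻¹ with hHdef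
  set S2 : ℝ := ∑ j ∈ Finset.Ioc m n, ((j:ℝ))⁻¹^2 with hS2def
  have step3 : ∏ j ∈ Finset.Ioc m n, Real.exp ((x + θ) * ((j:ℝ))⁻¹ + cz * ((j:ℝ)⁻¹)^2) =
      Real.exp ((x + θ) * H + cz * S2) := by
    rw [← Real.exp_sum]
    congr 1
    rw [Finset.sum_add_distrib, ← Finset.mul_sum, ← Finset.mul_sum]
  -- step 4 : bound the exponent
  have hlogy : Real.log y = Real.log n - Real.log m := by
    rw [hydef, Real.log_div (ne_of_gt hn0) (ne_of_gt hm0)]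
  have hH1 : H ≤ Real.log y := by rw [hlogy]; exact auxTele_sum_Ioc_inv_le m n hm hmn
  have hH2 : Real.log y - Real.log 2 ≤ H := by
    rw [hlogy]; have := auxTele_le_sum_Ioc_inv m n hm hmn; linarith
  have hS2a : S2 ≤ 1 := auxTele_sum_Ioc_inv_sq_le m n hm hmn
  have hS2b : 0 ≤ S2 := Finset.sum_nonneg (fun j _ => by positivity)
  have hczn : 0 ≤ cz := by positivity
  have hlog2 : Real.log 2 ≤ 1 := by
    rw [← Real.log_exp 1]
    apply Real.log_le_log (by norm_num)
    have := Real.exp_one_gt_d9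
    linarith
  have hlog2nn : 0 ≤ Real.log 2 := Real.log_nonneg (by norm_num)
  have hexpbound : (x + θ) * H + cz * S2 ≤ x * Real.log y + (2 + |x| + cz) := by
    have habs : |x + θ| ≤ |x| + 1 := le_trans (abs_add_le _ _) (by
      have : |θ| ≤ 1 := by rw [abs_of_pos hθ0]; exact hθ1
      linarith)
    have hθlog : θ * Real.log y ≤ 1 := by
      calc θ * Real.log y ≤ θ * L := by
            apply mul_le_mul_of_nonneg_left hlogyL (le_of_lt hθ0)
        _ = 1 := by rw [hθdef]; field_simp
    have hmain : (x + θ) * H ≤ (x + θ) * Real.log y + |x + θ| * Real.log 2 := by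
      rcases le_or_gt 0 (x + θ) with hs | hs
      · have h1 := mul_le_mul_of_nonneg_left hH1 hs
        have h2 : 0 ≤ |x + θ| * Real.log 2 := by positivity
        linarith
      · have h := mul_le_mul_of_nonpos_left hH2 (le_of_lt hs)
        rw [abs_of_neg hs]
        have hexp : (x + θ) * (Real.log y - Real.log 2) =
            (x + θ) * Real.log y - (x + θ) * Real.log 2 := by ring
        linarith
    have hczS : cz * S2 ≤ cz := by
      have := mul_le_mul_of_nonneg_left hS2a hczn
      linarith
    have hfin : |x + θ| * Real.log 2 ≤ (|x| + 1) * 1 := by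
      apply mul_le_mul habs hlog2 hlog2nn (by positivity)
    linarith
  -- step 5 : collect
  have hrpow : Real.exp (x * Real.log y) = y ^ x := by
    rw [Real.rpow_def_of_pos hy0]; ring_nf
  have key : ‖(∏ j ∈ Finset.Ioc m n,
      (C ((j:ℂ)⁻¹) * X + C (1 + z * (j:ℂ)⁻¹))).coeff k‖ ≤ L ^ k * (y ^ x * c1) := by
    have hexp : Real.exp ((x + θ) * H + cz * S2) ≤ y ^ x * c1 := by
      rw [hc1def, ← hrpow, ← Real.exp_add]
      exact Real.exp_le_exp.mpr (by linarith)
    have hθinv : θ⁻¹ = L := by rw [hθdef, inv_inv]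
    calc ‖(∏ j ∈ Finset.Ioc m n,
        (C ((j:ℂ)⁻¹) * X + C (1 + z * (j:ℂ)⁻¹))).coeff k‖
        ≤ θ⁻¹ ^ k * ∏ j ∈ Finset.Ioc m n, (θ * ‖((j:ℂ)⁻¹)‖ + ‖1 + z * (j:ℂ)⁻¹‖) := step1
      _ ≤ θ⁻¹ ^ k * (y ^ x * c1) := by
          apply mul_le_mul_of_nonneg_left _ (by positivity)
          calc ∏ j ∈ Finset.Ioc m n, (θ * ‖((j:ℂ)⁻¹)‖ + ‖1 + z * (j:ℂ)⁻¹‖)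
              ≤ ∏ j ∈ Finset.Ioc m n, Real.exp ((x + θ) * ((j:ℝ))⁻¹ + cz * ((j:ℝ)⁻¹)^2) :=
                step2
            _ = Real.exp ((x + θ) * H + cz * S2) := step3
            _ ≤ y ^ x * c1 := hexp
      _ = L ^ k * (y ^ x * c1) := by rw [hθinv]
  -- step 6 : case split
  have hLpow : (1:ℝ) ≤ L ^ (ν - 1) := one_le_pow₀ hL1
  have hylamnn : (0:ℝ) ≤ y ^ lam := Real.rpow_nonneg (le_of_lt hy0) _
  refine key.trans ?_
  rcases eq_or_lt_of_le hre with heq | hlt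
  · -- x = lam
    have hkk : k ≤ ν - 1 := hk heq
    have hLk : L ^ k ≤ L ^ (ν - 1) := pow_le_pow_right₀ hL1 hkk
    have hyx : y ^ x = y ^ lam := by rw [heq]
    have hLn : 0 ≤ L ^ (ν-1) := pow_nonneg (le_of_lt hL0) _
    rw [hyx]
    exact auxAlg1 _ _ _ _ _ hLk hylamnn hc1 hc2nn hLn
  · -- x < lam
    have hsplit : y ^ x = y ^ lam * y ^ (x - lam) := by
      rw [← Real.rpow_add hy0]; ring_nf
    have hdecay : L ^ k * y ^ (x - lam) ≤ c2 := hc2 hlt y hy1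
    have hyd : 0 ≤ y ^ (x - lam) := Real.rpow_nonneg (le_of_lt hy0) _
    have hLknn : 0 ≤ L ^ k := pow_nonneg (le_of_lt hL0) _
    have hLn : 0 ≤ L ^ (ν-1) := pow_nonneg (le_of_lt hL0) _
    calc L ^ k * (y ^ x * c1)
        = (L ^ k * y ^ (x - lam)) * y ^ lam * c1 := by rw [hsplit]; ring
      _ ≤ c2 * y ^ lam * c1 := by
          apply mul_le_mul_of_nonneg_right _ hc1
          exact mul_le_mul_of_nonneg_right hdecay hylamnn
      _ ≤ c1 * (c2+1) * y ^ lam * L ^ (ν-1) :=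
          auxAlg2 _ _ _ _ hylamnn hc1 hc2nn hLpow


lemma auxInvBound {d : ℕ} {ι : Type} [Fintype ι] (T : (Fin d → ℂ) →ₗ[ℂ] (ι → ℂ))
    (hT : Function.Injective T) : ∃ M : ℝ, 0 ≤ M ∧ ∀ c, ‖c‖ ≤ M * ‖T c‖ := by
  let e : (Fin d → ℂ) ≃ₗ[ℂ] LinearMap.range T := LinearEquiv.ofInjective T hT
  let S : LinearMap.range T →L[ℂ] (Fin d → ℂ) :=
    { toLinearMap := e.symm.toLinearMap
      cont := e.symm.toLinearMap.continuous_of_finiteDimensional }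
  refine ⟨‖S‖, S.opNorm_nonneg, fun c => ?_⟩
  have h1 : S (e c) = c := e.symm_apply_apply c
  have h2 : ‖e c‖ = ‖T c‖ := by
    have hcoe : ((e c : LinearMap.range T) : ι → ℂ) = T c :=
      LinearEquiv.ofInjective_apply T c
    rw [← hcoe]
    rfl
  calc ‖c‖ = ‖S (e c)‖ := by rw [h1]
    _ ≤ ‖S‖ * ‖(e c)‖ := S.le_opNorm _
    _ = ‖S‖ * ‖T c‖ := by rw [h2]


/-- Bound `‖B̄_{n,m}‖ ≤ C (n/m)^λ (log(n/m))^{ν−1}` (entrywise), where every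
eigenvalue of `H̄` has real part at most `λ < 1` and `ν ≥ 1` bounds the Jordan
block sizes (multiplicity in the minimal polynomial) of the eigenvalues with
real part `λ`; here `log x = ln (max x e)`. -/
theorem stmt16 (K : ℕ) (Hb : Matrix (Fin K) (Fin K) ℝ) (lam : ℝ) (ν : ℕ)
    (hlam : lam < 1) (hν : 1 ≤ ν)
    (heig : ∀ z : ℂ, (Hb.map (Complex.ofReal)).charpoly.IsRoot z → z.re ≤ lam)
    (hjordan : ∀ z : ℂ, (Hb.map (Complex.ofReal)).charpoly.IsRoot z → z.re = lam →
      (minpoly ℂ (Hb.map (Complex.ofReal))).rootMultiplicity z ≤ ν)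
    (B : ℕ → ℕ → Matrix (Fin K) (Fin K) ℝ)
    (hBnn : ∀ n, B n n = 1)
    (hBrec : ∀ n i, i < n → B n i = (1 + ((i + 1 : ℕ) : ℝ)⁻¹ • Hb) * B n (i + 1)) :
    ∃ C : ℝ, ∀ m n : ℕ, 1 ≤ m → m ≤ n → ∀ i j : Fin K,
      |B n m i j| ≤ C * ((n : ℝ) / m) ^ lam *
        (Real.log (max ((n : ℝ) / m) (Real.exp 1))) ^ (ν - 1) := by
  classical
  rcases Nat.eq_zero_or_pos K with hK0 | hK
  · subst hK0
    exact ⟨0, fun m n _ _ i j => i.elim0⟩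
  haveI : Nonempty (Fin K) := ⟨⟨0, hK⟩⟩
  set A : Matrix (Fin K) (Fin K) ℂ := Hb.map Complex.ofReal with hAdef
  have hint : IsIntegral ℂ A := Algebra.IsIntegral.isIntegral A
  set p : Polynomial ℂ := minpoly ℂ A with hpdef
  have hpmonic : p.Monic := minpoly.monic hint
  have hpne : p ≠ 0 := hpmonic.ne_zero
  set d : ℕ := p.natDegree with hddef
  have hd : 0 < d := minpoly.natDegree_pos hint
  have hpdeg : p.degree = (d:ℕ) := Polynomial.degree_eq_natDegree hpne
  set μ : ℂ → ℕ := fun z => Polynomial.rootMultiplicity z p with hμdef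
  set R : Finset ℂ := p.roots.toFinset with hRdef
  -- root facts
  have hpd : p ∣ A.charpoly := minpoly.dvd ℂ A (A.aeval_self_charpoly)
  have hroot_charpoly : ∀ z ∈ R, A.charpoly.IsRoot z := by
    intro z hz
    have hzr : z ∈ p.roots := Multiset.mem_toFinset.mp hz
    have hz' : p.IsRoot z := (Polynomial.mem_roots hpne).mp hzr
    obtain ⟨t, ht⟩ := hpd
    rw [Polynomial.IsRoot, ht, Polynomial.eval_mul, hz'.eq_zero, zero_mul]
  have hroot_re : ∀ z ∈ R, z.re ≤ lam := fun z hz => heig z (hroot_charpoly z hz)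
  have hroot_mult : ∀ z ∈ R, z.re = lam → μ z ≤ ν :=
    fun z hz h => hjordan z (hroot_charpoly z hz) h
  -- the coefficient-vector to polynomial map
  set ofcL : (Fin d → ℂ) →ₗ[ℂ] Polynomial ℂ :=
    Fintype.linearCombination ℂ (fun i : Fin d => (Polynomial.X : Polynomial ℂ)^(i:ℕ))
    with hofcLdef
  have hofc_coeff : ∀ (c : Fin d → ℂ) (i : ℕ),
      (ofcL c).coeff i = if h : i < d then c ⟨i,h⟩ else 0 := by
    intro c i
    rw [hofcLdef, Fintype.linearCombination_apply, Polynomial.finset_sum_coeff]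
    simp only [Polynomial.coeff_smul, Polynomial.coeff_X_pow, smul_eq_mul, mul_ite, mul_one,
      mul_zero]
    by_cases h : i < d
    · rw [dif_pos h]
      rw [Finset.sum_eq_single (⟨i, h⟩ : Fin d)]
      · simp
      · intro b _ hb
        have : i ≠ (b:ℕ) := fun he => hb (by
          apply Fin.ext
          simp [← he])
        simp [this]
      · simp
    · rw [dif_neg h]
      apply Finset.sum_eq_zero
      intro b _
      have : i ≠ (b:ℕ) := by
        intro he
        exact h (he ▸ b.isLt)
      simp [this]
  have hofc_deg : ∀ c, (ofcL c).degree < (d:ℕ) := by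
    intro c
    rw [hofcLdef, Fintype.linearCombination_apply]
    apply lt_of_le_of_lt (Polynomial.degree_sum_le _ _)
    rw [Finset.sup_lt_iff (by exact_mod_cast WithBot.bot_lt_coe d)]
    intro b _
    apply lt_of_le_of_lt (Polynomial.degree_smul_le _ _)
    rw [Polynomial.degree_X_pow]
    exact_mod_cast b.isLt
  -- index type and interpolation map
  let ι : Type := (z : {w : ℂ // w ∈ R}) × Fin (μ z.val)
  let T : (Fin d → ℂ) →ₗ[ℂ] (ι → ℂ) :=
    LinearMap.pi (fun q : ι =>
      (Polynomial.lcoeff ℂ (q.2 : ℕ)).comp ((Polynomial.taylor (q.1.val : ℂ)).comp ofcL))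
  have hT_apply : ∀ (c : Fin d → ℂ) (q : ι),
      T c q = (Polynomial.taylor q.1.val (ofcL c)).coeff (q.2 : ℕ) := fun c q => rfl
  -- injectivity
  have hTker : ∀ c, T c = 0 → c = 0 := by
    intro c hc
    set r := ofcL c with hrdef
    have hzero : ∀ z (hz : z ∈ R) k (hk : k < μ z), (Polynomial.taylor z r).coeff k = 0 := by
      intro z hz k hk
      have := congrFun hc ⟨⟨z, hz⟩, ⟨k, hk⟩⟩
      rwa [hT_apply, Pi.zero_apply] at this
    have hdvd1 : ∀ z ∈ R, (Polynomial.X - Polynomial.C z)^(μ z) ∣ r := by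
      intro z hz
      conv_rhs => rw [← Polynomial.sum_taylor_eq r z]
      apply Finset.dvd_sum
      intro i hi
      have hile : μ z ≤ i := by
        by_contra hcon
        push_neg at hcon
        exact (Polynomial.mem_support_iff.mp hi) (hzero z hz i hcon)
      exact Dvd.dvd.mul_left (pow_dvd_pow _ hile) _
    have hpair : (R : Set ℂ).Pairwise
        (Function.onFun IsCoprime fun z => (Polynomial.X - Polynomial.C z)^(μ z)) := by
      intro a _ b _ hab
      exact (Polynomial.isCoprime_X_sub_C_of_isUnit_sub
        ((sub_ne_zero.mpr hab).isUnit)).pow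
    have hprod_dvd : (∏ z ∈ R, (Polynomial.X - Polynomial.C z)^(μ z)) ∣ r :=
      Finset.prod_dvd_of_coprime hpair hdvd1
    have hpeq : p = ∏ z ∈ R, (Polynomial.X - Polynomial.C z)^(μ z) := by
      have h1 := (IsAlgClosed.splits p).eq_prod_roots_of_monic hpmonic
      have h2 := Finset.prod_multiset_map_count p.roots
        (fun a => Polynomial.X - Polynomial.C a)
      rw [h1, h2]
      apply Finset.prod_congr rfl
      intro z hz
      rw [Polynomial.count_roots]
    have hpdvd : p ∣ r := hpeq ▸ hprod_dvd
    have hr0 : r = 0 := by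
      apply Polynomial.eq_zero_of_dvd_of_degree_lt hpdvd
      rw [hpdeg]
      exact hofc_deg c
    funext i
    have := hofc_coeff c (i : ℕ)
    rw [← hrdef, hr0, Polynomial.coeff_zero] at this
    rw [Pi.zero_apply]
    rw [dif_pos i.isLt] at this
    simpa using this.symm
  have hTinj : Function.Injective T := by
    intro a b hab
    have : T (a - b) = 0 := by rw [map_sub, hab, sub_self]
    have := hTker _ this
    exact sub_eq_zero.mp this
  obtain ⟨M, hM0, hM⟩ := auxInvBound T hTinj
  -- per-index analytic constants
  have hcore : ∀ q : ι, ∃ c : ℝ, 0 ≤ c ∧ ∀ m n : ℕ, 1 ≤ m → m ≤ n →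
      ‖(∏ j ∈ Finset.Ioc m n,
          (Polynomial.C ((j:ℂ)⁻¹) * Polynomial.X +
            Polynomial.C (1 + q.1.val * (j:ℂ)⁻¹))).coeff (q.2 : ℕ)‖ ≤
        c * ((n:ℝ)/m) ^ lam * (Real.log (max ((n:ℝ)/m) (Real.exp 1))) ^ (ν-1) := by
    intro q
    apply auxCore lam ν hν q.1.val (q.2 : ℕ) (hroot_re q.1.val q.1.2)
    intro hre
    have h1 : μ q.1.val ≤ ν := hroot_mult q.1.val q.1.2 hre
    have h2 : (q.2 : ℕ) < μ q.1.val := q.2.isLt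
    omega
  choose cq hcq0 hcqb using hcore
  set C2 : ℝ := ∑ q ∈ Finset.univ, cq q with hC2def
  have hC2nn : 0 ≤ C2 := Finset.sum_nonneg (fun q _ => hcq0 q)
  have hC2q : ∀ q : ι, cq q ≤ C2 :=
    fun q => Finset.single_le_sum (fun q _ => hcq0 q) (Finset.mem_univ q)
  -- matrix power entry bounds
  set EA : ℕ → ℝ := fun i => ∑ a : Fin K, ∑ b : Fin K, ‖(A^i) a b‖ with hEAdef
  have hEAnn : ∀ i, 0 ≤ EA i := fun i =>
    Finset.sum_nonneg fun a _ => Finset.sum_nonneg fun b _ => norm_nonneg _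
  have hEA : ∀ i (a b : Fin K), ‖(A^i) a b‖ ≤ EA i := by
    intro i a b
    calc ‖(A^i) a b‖ ≤ ∑ b' : Fin K, ‖(A^i) a b'‖ :=
          Finset.single_le_sum (fun b' _ => norm_nonneg _) (Finset.mem_univ b)
      _ ≤ EA i := Finset.single_le_sum
          (fun a' _ => Finset.sum_nonneg fun b' _ => norm_nonneg _) (Finset.mem_univ a)
  set CA : ℝ := ∑ i ∈ Finset.range d, EA i with hCAdef
  have hCAnn : 0 ≤ CA := Finset.sum_nonneg fun i _ => hEAnn i
  -- B in polynomial form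
  have hBP : ∀ t m n : ℕ, m ≤ n → n - m = t → B n m =
      Polynomial.aeval Hb (∏ j ∈ Finset.Ioc m n,
        (Polynomial.C ((j:ℝ)⁻¹) * Polynomial.X + 1)) := by
    intro t
    induction t with
    | zero =>
      intro m n hmn ht
      have : m = n := by omega
      subst this
      rw [Finset.Ioc_self, Finset.prod_empty, _root_.map_one, hBnn]
    | succ t ih =>
      intro m n hmn ht
      have hlt : m < n := by omega
      have hdec : Finset.Ioc m n = insert (m+1) (Finset.Ioc (m+1) n) := by
        ext x; simp only [Finset.mem_Ioc, Finset.mem_insert]; omega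
      rw [hBrec n m hlt, ih (m+1) n (by omega) (by omega), hdec,
        Finset.prod_insert (by simp [Finset.mem_Ioc]), _root_.map_mul]
      congr 1
      rw [map_add, _root_.map_mul, Polynomial.aeval_C, Polynomial.aeval_X, _root_.map_one,
        ← Algebra.smul_def, add_comm]
  -- complexification
  have hmapB : ∀ m n : ℕ, m ≤ n → (B n m).map Complex.ofReal =
      Polynomial.aeval A (∏ j ∈ Finset.Ioc m n,
        (Polynomial.C ((j:ℂ)⁻¹) * Polynomial.X + 1)) := by
    intro m n hmn
    rw [hBP (n-m) m n hmn rfl]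
    set φ : Matrix (Fin K) (Fin K) ℝ →+* Matrix (Fin K) (Fin K) ℂ :=
      (Complex.ofRealHom).mapMatrix with hφdef
    have hφapp : ∀ M : Matrix (Fin K) (Fin K) ℝ, φ M = M.map Complex.ofReal := by
      intro M; rfl
    rw [← hφapp]
    rw [Polynomial.aeval_def, Polynomial.hom_eval₂]
    have hcomp : φ.comp (algebraMap ℝ (Matrix (Fin K) (Fin K) ℝ)) =
        (algebraMap ℂ (Matrix (Fin K) (Fin K) ℂ)).comp Complex.ofRealHom := by
      apply RingHom.ext
      intro x
      apply Matrix.ext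
      intro a b
      by_cases hab : a = b
      · subst hab
        simp [hφdef, Matrix.algebraMap_matrix_apply, RingHom.mapMatrix_apply,
          Matrix.map_apply]
      · simp [hφdef, Matrix.algebraMap_matrix_apply, RingHom.mapMatrix_apply,
          Matrix.map_apply, hab]
    rw [hcomp, ← Polynomial.eval₂_map, hφapp, ← hAdef, ← Polynomial.aeval_def]
    congr 1
    rw [Polynomial.map_prod]
    apply Finset.prod_congr rfl
    intro j _
    rw [Polynomial.map_add, Polynomial.map_mul, Polynomial.map_C, Polynomial.map_X,
      Polynomial.map_one]
    congr 2
    simp [Complex.ofRealHom]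
  -- final constant
  refine ⟨M * C2 * CA, ?_⟩
  intro m n hm hmn i0 j0
  set y : ℝ := (n:ℝ)/m with hydef
  set L : ℝ := Real.log (max y (Real.exp 1)) with hLdef
  set Y : ℝ := y ^ lam * L ^ (ν-1) with hYdef
  have hynn : 0 ≤ y := by
    rw [hydef]; positivity
  have hYnn : 0 ≤ Y := by
    have h1 : (0:ℝ) ≤ y ^ lam := Real.rpow_nonneg hynn _
    have hL1 : 1 ≤ L := by
      have h := Real.log_le_log (Real.exp_pos 1) (le_max_right y (Real.exp 1))
      rwa [Real.log_exp] at h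
    have h2 : (0:ℝ) ≤ L ^ (ν-1) := pow_nonneg (by linarith) _
    exact mul_nonneg h1 h2
  set Qc : Polynomial ℂ := ∏ j ∈ Finset.Ioc m n,
    (Polynomial.C ((j:ℂ)⁻¹) * Polynomial.X + 1) with hQcdef
  set r : Polynomial ℂ := Qc %ₘ p with hrdef
  set g : Polynomial ℂ := Qc /ₘ p with hgdef
  have hQeq : Qc = r + p * g := by
    rw [hrdef, hgdef, Polynomial.modByMonic_add_div Qc p]
  have haeval : Polynomial.aeval A Qc = Polynomial.aeval A r := by
    rw [hQeq, map_add, _root_.map_mul]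
    have : Polynomial.aeval A p = 0 := minpoly.aeval ℂ A
    rw [this, zero_mul, add_zero]
  have hrdeg : r.degree < (d:ℕ) := by
    rw [← hpdeg]
    exact Polynomial.degree_modByMonic_lt Qc hpmonic
  have hrnat : r.natDegree < d := by
    by_cases h : r = 0
    · rw [h, Polynomial.natDegree_zero]; exact hd
    · exact (Polynomial.natDegree_lt_iff_degree_lt h).mpr hrdeg
  set cvec : Fin d → ℂ := fun i => r.coeff (i : ℕ) with hcvecdef
  have hofc_r : ofcL cvec = r := by
    apply Polynomial.ext
    intro i
    rw [hofc_coeff]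
    by_cases h : i < d
    · rw [dif_pos h]
    · rw [dif_neg h]
      symm
      apply Polynomial.coeff_eq_zero_of_degree_lt
      apply lt_of_lt_of_le hrdeg
      exact_mod_cast Nat.le_of_not_lt h
  -- taylor coefficients of Qc and r agree below the multiplicity
  have htaylor_eq : ∀ q : ι, (Polynomial.taylor q.1.val r).coeff (q.2 : ℕ) =
      (Polynomial.taylor q.1.val Qc).coeff (q.2 : ℕ) := by
    intro q
    obtain ⟨⟨z, hz⟩, k⟩ := q
    have hmulz : (Polynomial.taylor z (p * g)).coeff (k : ℕ) = 0 := by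
      rw [Polynomial.taylor_mul]
      have hXdvd : (Polynomial.X : Polynomial ℂ)^(μ z) ∣ Polynomial.taylor z p := by
        obtain ⟨w, hw⟩ := Polynomial.pow_rootMultiplicity_dvd p z
        refine ⟨Polynomial.taylor z w, ?_⟩
        rw [hw, Polynomial.taylor_mul]
        congr 1
        rw [Polynomial.taylor_apply, Polynomial.pow_comp, Polynomial.sub_comp,
          Polynomial.X_comp, Polynomial.C_comp]
        simp
        rfl
      have hdvd2 : (Polynomial.X : Polynomial ℂ)^(μ z) ∣
          Polynomial.taylor z p * Polynomial.taylor z g := Dvd.dvd.mul_right hXdvd _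
      exact Polynomial.X_pow_dvd_iff.mp hdvd2 (k : ℕ) k.isLt
    have : (Polynomial.taylor z Qc) = Polynomial.taylor z r + Polynomial.taylor z (p * g) := by
      rw [hQeq, map_add]
    rw [this, Polynomial.coeff_add, hmulz, add_zero]
  -- taylor of Qc as a product of linear factors
  have hprodQ : ∀ z : ℂ, Polynomial.taylor z Qc = ∏ j ∈ Finset.Ioc m n,
      (Polynomial.C ((j:ℂ)⁻¹) * Polynomial.X + Polynomial.C (1 + z * (j:ℂ)⁻¹)) := by
    intro z
    let τ : Polynomial ℂ →* Polynomial ℂ :=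
      { toFun := ⇑(Polynomial.taylor z)
        map_one' := by rw [Polynomial.taylor_one, Polynomial.C_1]
        map_mul' := fun a b => Polynomial.taylor_mul z a b }
    have : Polynomial.taylor z Qc = τ Qc := rfl
    rw [this, hQcdef, map_prod]
    apply Finset.prod_congr rfl
    intro j _
    show Polynomial.taylor z _ = _
    rw [map_add, Polynomial.taylor_one]
    have h1 : Polynomial.taylor z (Polynomial.C ((j:ℂ)⁻¹) * Polynomial.X) =
        Polynomial.C ((j:ℂ)⁻¹) * (Polynomial.X + Polynomial.C z) := by
      rw [Polynomial.taylor_apply, Polynomial.mul_comp, Polynomial.C_comp, Polynomial.X_comp]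
    rw [h1, mul_add, ← Polynomial.C_mul, add_assoc, ← Polynomial.C_add]
    congr 2
    ring
  -- bound on T cvec
  have hTbound : ‖T cvec‖ ≤ C2 * Y := by
    rw [pi_norm_le_iff_of_nonneg (by positivity)]
    intro q
    rw [hT_apply, hofc_r, htaylor_eq q, hprodQ]
    calc ‖(∏ j ∈ Finset.Ioc m n,
        (Polynomial.C ((j:ℂ)⁻¹) * Polynomial.X +
          Polynomial.C (1 + q.1.val * (j:ℂ)⁻¹))).coeff (q.2 : ℕ)‖
        ≤ cq q * y ^ lam * L ^ (ν-1) := hcqb q m n hm hmn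
      _ ≤ C2 * Y := by
          rw [hYdef, ← mul_assoc]
          apply mul_le_mul_of_nonneg_right _ (pow_nonneg (by
            have h := Real.log_le_log (Real.exp_pos 1) (le_max_right y (Real.exp 1))
            rw [Real.log_exp] at h
            linarith) _)
          exact mul_le_mul_of_nonneg_right (hC2q q) (Real.rpow_nonneg hynn _)
  have hcvec : ∀ i : Fin d, ‖r.coeff (i:ℕ)‖ ≤ M * (C2 * Y) := by
    intro i
    calc ‖r.coeff (i:ℕ)‖ = ‖cvec i‖ := rfl
      _ ≤ ‖cvec‖ := norm_le_pi_norm cvec i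
      _ ≤ M * ‖T cvec‖ := hM cvec
      _ ≤ M * (C2 * Y) := mul_le_mul_of_nonneg_left hTbound hM0
  -- entrywise bound
  have hBentry : ((B n m i0 j0 : ℝ) : ℂ) = (Polynomial.aeval A r) i0 j0 := by
    have h1 := hmapB m n hmn
    rw [← hQcdef] at h1
    have h2 : ((B n m).map Complex.ofReal) i0 j0 = ((B n m) i0 j0 : ℂ) := rfl
    rw [← h2, h1, haeval]
  have habs : |B n m i0 j0| = ‖(Polynomial.aeval A r) i0 j0‖ := by
    rw [← hBentry, Complex.norm_real, Real.norm_eq_abs]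
  rw [habs]
  have hsum : Polynomial.aeval A r = ∑ i ∈ Finset.range d, r.coeff i • A^i :=
    Polynomial.aeval_eq_sum_range' hrnat A
  rw [hsum]
  have hentry : (∑ i ∈ Finset.range d, r.coeff i • A^i) i0 j0 =
      ∑ i ∈ Finset.range d, r.coeff i * (A^i) i0 j0 := by
    rw [Matrix.sum_apply]
    apply Finset.sum_congr rfl
    intro i _
    rw [Matrix.smul_apply, smul_eq_mul]
  rw [hentry]
  calc ‖∑ i ∈ Finset.range d, r.coeff i * (A^i) i0 j0‖
      ≤ ∑ i ∈ Finset.range d, ‖r.coeff i * (A^i) i0 j0‖ := norm_sum_le _ _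
    _ ≤ ∑ i ∈ Finset.range d, (M * (C2 * Y)) * EA i := by
        apply Finset.sum_le_sum
        intro i hi
        rw [norm_mul]
        have hi' : i < d := Finset.mem_range.mp hi
        apply mul_le_mul (hcvec ⟨i, hi'⟩) (hEA i i0 j0) (norm_nonneg _)
          (by positivity)
    _ = (M * (C2 * Y)) * CA := by rw [← Finset.mul_sum]
    _ = M * C2 * CA * y ^ lam * L ^ (ν-1) := by rw [hYdef]; ring
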